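/- (Markov chains induced by interactive encoding of two nodes, items 4 and 5.) For every t ∈ {1,…,n}, the following Markov chains hold: (i) X_{[t+1:n]} −∘− (J_x^{[1:K]}, J_y^{[1:K]}, X_{[1:t]}, Y_{[t+1:n]}) −∘− (Y_t, Z_t); and (ii) Y_{[1:t-1]} −∘− (J_x^{[1:K]}, J_y^{[1:K]}, X_{[1:t-1]}, Y_{[t:n]}) −∘− (X_t, Z_t). -/

import Mathlib

noncomputable section

namespace IT

variable {Ω : Type*} [Fintype Ω]

open Classical in
/-- Probability of an event under a weight function on a finite sample space. -/
def pr (w : Ω → ℝ) (E : Ω → Prop) : ℝ := ∑ ω, if E ω then w ω else 0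

open Classical in
/-- The distribution (pmf) of a random variable. -/
def dist (w : Ω → ℝ) {α : Type*} [Fintype α] (X : Ω → α) (a : α) : ℝ :=
  ∑ ω, if X ω = a then w ω else 0

/-- Shannon entropy (base 2). -/
def H (w : Ω → ℝ) {α : Type*} [Fintype α] (X : Ω → α) : ℝ :=
  -∑ a, dist w X a * Real.logb 2 (dist w X a)

/-- Conditional entropy H(X|Y). -/
def condH (w : Ω → ℝ) {α β : Type*} [Fintype α] [Fintype β] (X : Ω → α) (Y : Ω → β) : ℝ :=
  H w (fun ω => (X ω, Y ω)) - H w Y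

/-- Mutual information I(X;Y). -/
def mutInfo (w : Ω → ℝ) {α β : Type*} [Fintype α] [Fintype β] (X : Ω → α) (Y : Ω → β) : ℝ :=
  H w X + H w Y - H w (fun ω => (X ω, Y ω))

/-- Conditional mutual information I(X;Y|Z). -/
def condMutInfo (w : Ω → ℝ) {α β γ : Type*} [Fintype α] [Fintype β] [Fintype γ]
    (X : Ω → α) (Y : Ω → β) (Z : Ω → γ) : ℝ :=
  condH w X Z - condH w X (fun ω => (Y ω, Z ω))

/-- Expectation of a real random variable. -/
def expect (w : Ω → ℝ) (f : Ω → ℝ) : ℝ := ∑ ω, w ω * f ω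

end IT

/-- `p` is a probability mass function on a finite type. -/
def IsPMF {α : Type*} [Fintype α] (p : α → ℝ) : Prop := (∀ a, 0 ≤ p a) ∧ ∑ a, p a = 1

/-- The i.i.d. (product) weight on `n`-sequences induced by a single-letter pmf. -/
def iidW {α : Type*} (p : α → ℝ) (n : ℕ) : (Fin n → α) → ℝ := fun x => ∏ t, p (x t)

/-- The first `l` components of a dependent tuple (the rest masked). -/
def trunc {K : ℕ} {γ : Fin K → Type*} (l : ℕ) (f : (k : Fin K) → γ k) :
    (k : Fin K) → Option (γ k) :=
  fun k => if k.val < l then some (f k) else none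

/-- Coordinates with (0-based) index `< t`. -/
def below {n : ℕ} {α : Type*} (t : ℕ) (x : Fin n → α) : Fin n → Option α :=
  fun s => if s.val < t then some (x s) else none

/-- Coordinates with (0-based) index `> t`. -/
def above {n : ℕ} {α : Type*} (t : ℕ) (x : Fin n → α) : Fin n → Option α :=
  fun s => if t < s.val then some (x s) else none

/-- Coordinates with (0-based) index `≥ t`. -/
def fromIdx {n : ℕ} {α : Type*} (t : ℕ) (x : Fin n → α) : Fin n → Option α :=
  fun s => if t ≤ s.val then some (x s) else none

open Classical in
/-- Number of occurrences of `a` in the sequence `x`. -/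
def Nocc {n : ℕ} {α : Type*} (a : α) (x : Fin n → α) : ℕ :=
  (Finset.univ.filter fun t => x t = a).card

/-- Strongly typical set. -/
def typical {α : Type*} [Fintype α] (Q : α → ℝ) (δ : ℝ) (n : ℕ) : Set (Fin n → α) :=
  {x | ∀ a, Q a ≠ 0 → |(Nocc a x : ℝ) / n - Q a| ≤ δ / Fintype.card α}


namespace IT
variable {Ω : Type*} [Fintype Ω]
open Classical

lemma dist_comp {α β : Type*} [Fintype α] [Fintype β] (w : Ω → ℝ) (V : Ω → α) (g : α → β) (b : β) :
    dist w (fun ω => g (V ω)) b = ∑ a, if g a = b then dist w V a else 0 := by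
  have step : ∀ a : α, (if g a = b then dist w V a else 0)
      = ∑ ω, if g a = b ∧ V ω = a then w ω else 0 := by
    intro a; by_cases h : g a = b <;> simp [dist, h]
  rw [Finset.sum_congr rfl (fun a _ => step a), Finset.sum_comm]
  simp only [dist]
  refine Finset.sum_congr rfl fun ω _ => ?_
  rw [Finset.sum_eq_single (V ω)]
  · simp
  · intro a _ ha
    simp only [ite_eq_right_iff, and_imp]
    intro _ h; exact absurd h.symm ha
  · simp

lemma H_comp {α β : Type*} [Fintype α] [Fintype β] (w : Ω → ℝ) (V : Ω → α) (g : α → β) :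
    H w (fun ω => g (V ω))
      = -∑ a, dist w V a * Real.logb 2 (dist w (fun ω => g (V ω)) (g a)) := by
  unfold H
  congr 1
  calc ∑ b, dist w (fun ω => g (V ω)) b * Real.logb 2 (dist w (fun ω => g (V ω)) b)
      = ∑ b, ∑ a, (if g a = b then dist w V a * Real.logb 2 (dist w (fun ω => g (V ω)) b) else 0) := by
        refine Finset.sum_congr rfl fun b _ => ?_
        rw [dist_comp w V g b, Finset.sum_mul]
        simp [ite_mul]
    _ = ∑ a, dist w V a * Real.logb 2 (dist w (fun ω => g (V ω)) (g a)) := by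
        rw [Finset.sum_comm]
        refine Finset.sum_congr rfl fun a _ => ?_
        simp

lemma cmi_zero_of_dist_factor {α β γ : Type*} [Fintype α] [Fintype β] [Fintype γ]
    (w : Ω → ℝ) (A : Ω → α) (B : Ω → β) (C : Ω → γ)
    (F : α → γ → ℝ) (G : β → γ → ℝ)
    (hF : ∀ a c, 0 ≤ F a c) (hG : ∀ b c, 0 ≤ G b c)
    (h : ∀ a b c, dist w (fun ω => (A ω, B ω, C ω)) (a, b, c) = F a c * G b c) :
    condMutInfo w A B C = 0 := by
  set V : Ω → α × β × γ := fun ω => (A ω, B ω, C ω) with hV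
  have hV' : ∀ v : α × β × γ, dist w V v = F v.1 v.2.2 * G v.2.1 v.2.2 := by
    rintro ⟨a, b, c⟩; exact h a b c
  set SF : γ → ℝ := fun c => ∑ a, F a c with hSF
  set SG : γ → ℝ := fun c => ∑ b, G b c with hSG
  -- marginals
  have hAC : ∀ a c, dist w (fun ω => (A ω, C ω)) (a, c) = F a c * SG c := by
    intro a c
    have : (fun ω => (A ω, C ω)) = fun ω => ((V ω).1, (V ω).2.2) := rfl
    rw [this, dist_comp w V (fun v => (v.1, v.2.2)) (a, c)]
    simp only [hV', Prod.mk.injEq, Fintype.sum_prod_type]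
    simp [ite_and, Finset.sum_ite_eq', Finset.mul_sum]
    rw [← Finset.mul_sum]
  have hBC : ∀ b c, dist w (fun ω => (B ω, C ω)) (b, c) = SF c * G b c := by
    intro b c
    have : (fun ω => (B ω, C ω)) = fun ω => ((V ω).2.1, (V ω).2.2) := rfl
    rw [this, dist_comp w V (fun v => (v.2.1, v.2.2)) (b, c)]
    simp only [hV', Prod.mk.injEq, Fintype.sum_prod_type]
    simp [ite_and, Finset.sum_ite_eq', Finset.sum_mul, Finset.mul_sum]
    rw [← Finset.sum_mul]
  have hC : ∀ c, dist w C c = SF c * SG c := by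
    intro c
    have : C = fun ω => (V ω).2.2 := rfl
    rw [this, dist_comp w V (fun v => v.2.2) c]
    simp only [hV', Fintype.sum_prod_type]
    simp [Finset.sum_ite_eq', Finset.sum_mul, Finset.mul_sum]
    rw [Finset.sum_comm]
    simp only [← Finset.sum_mul, ← Finset.mul_sum]
    rfl
  have hFull : ∀ a b c, dist w (fun ω => (A ω, (B ω, C ω))) (a, (b, c)) = F a c * G b c := by
    intro a b c
    have : (fun ω => (A ω, (B ω, C ω))) = fun ω => ((V ω).1, ((V ω).2.1, (V ω).2.2)) := rfl
    rw [this, dist_comp w V (fun v => (v.1, (v.2.1, v.2.2))) (a, (b, c))]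
    simp only [hV', Prod.mk.injEq, Fintype.sum_prod_type]
    simp [ite_and, Finset.sum_ite_eq']
  -- entropies via H_comp
  have eAC : H w (fun ω => (A ω, C ω))
      = -∑ v : α × β × γ, dist w V v * Real.logb 2 (F v.1 v.2.2 * SG v.2.2) := by
    have : (fun ω => (A ω, C ω)) = fun ω => ((V ω).1, (V ω).2.2) := rfl
    rw [this, H_comp w V (fun v => (v.1, v.2.2))]
    congr 1; refine Finset.sum_congr rfl fun v _ => ?_
    rw [show (fun ω => ((V ω).1, (V ω).2.2)) = (fun ω => (A ω, C ω)) from rfl, hAC]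
  have eBC : H w (fun ω => (B ω, C ω))
      = -∑ v : α × β × γ, dist w V v * Real.logb 2 (SF v.2.2 * G v.2.1 v.2.2) := by
    have : (fun ω => (B ω, C ω)) = fun ω => ((V ω).2.1, (V ω).2.2) := rfl
    rw [this, H_comp w V (fun v => (v.2.1, v.2.2))]
    congr 1; refine Finset.sum_congr rfl fun v _ => ?_
    rw [show (fun ω => ((V ω).2.1, (V ω).2.2)) = (fun ω => (B ω, C ω)) from rfl, hBC]
  have eC : H w C = -∑ v : α × β × γ, dist w V v * Real.logb 2 (SF v.2.2 * SG v.2.2) := by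
    have : C = fun ω => (V ω).2.2 := rfl
    rw [this, H_comp w V (fun v => v.2.2)]
    congr 1; refine Finset.sum_congr rfl fun v _ => ?_
    rw [show (fun ω => (V ω).2.2) = C from rfl, hC]
  have eFull : H w (fun ω => (A ω, (B ω, C ω)))
      = -∑ v : α × β × γ, dist w V v * Real.logb 2 (F v.1 v.2.2 * G v.2.1 v.2.2) := by
    have : (fun ω => (A ω, (B ω, C ω))) = fun ω => ((V ω).1, ((V ω).2.1, (V ω).2.2)) := rfl
    rw [this, H_comp w V (fun v => (v.1, (v.2.1, v.2.2)))]
    congr 1; refine Finset.sum_congr rfl fun v _ => ?_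
    rw [show (fun ω => ((V ω).1, ((V ω).2.1, (V ω).2.2))) = (fun ω => (A ω, (B ω, C ω))) from rfl,
      hFull]
  unfold condMutInfo condH
  rw [eAC, eBC, eC, eFull]
  have : ∀ v : α × β × γ,
      dist w V v * Real.logb 2 (F v.1 v.2.2 * SG v.2.2)
      - dist w V v * Real.logb 2 (SF v.2.2 * SG v.2.2)
      - (dist w V v * Real.logb 2 (F v.1 v.2.2 * G v.2.1 v.2.2)
        - dist w V v * Real.logb 2 (SF v.2.2 * G v.2.1 v.2.2)) = 0 := by
    rintro ⟨a, b, c⟩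
    simp only [hV']
    by_cases hFz : F a c = 0
    · simp [hFz]
    by_cases hGz : G b c = 0
    · simp [hGz]
    have hFpos : 0 < F a c := lt_of_le_of_ne (hF a c) (Ne.symm hFz)
    have hGpos : 0 < G b c := lt_of_le_of_ne (hG b c) (Ne.symm hGz)
    have hSFpos : 0 < SF c := lt_of_lt_of_le hFpos
      (Finset.single_le_sum (fun a _ => hF a c) (Finset.mem_univ a))
    have hSGpos : 0 < SG c := lt_of_lt_of_le hGpos
      (Finset.single_le_sum (fun b _ => hG b c) (Finset.mem_univ b))
    rw [Real.logb_mul hFz hSGpos.ne', Real.logb_mul hSFpos.ne' hSGpos.ne',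
      Real.logb_mul hFz hGz, Real.logb_mul hSFpos.ne' hGz]
    ring
  calc -∑ v : α × β × γ, dist w V v * Real.logb 2 (F v.1 v.2.2 * SG v.2.2)
        - -∑ v : α × β × γ, dist w V v * Real.logb 2 (SF v.2.2 * SG v.2.2)
        - (-∑ v : α × β × γ, dist w V v * Real.logb 2 (F v.1 v.2.2 * G v.2.1 v.2.2)
          - -∑ v : α × β × γ, dist w V v * Real.logb 2 (SF v.2.2 * G v.2.1 v.2.2))
      = -∑ v : α × β × γ, (dist w V v * Real.logb 2 (F v.1 v.2.2 * SG v.2.2)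
          - dist w V v * Real.logb 2 (SF v.2.2 * SG v.2.2)
          - (dist w V v * Real.logb 2 (F v.1 v.2.2 * G v.2.1 v.2.2)
            - dist w V v * Real.logb 2 (SF v.2.2 * G v.2.1 v.2.2))) := by
        rw [Finset.sum_sub_distrib, Finset.sum_sub_distrib, Finset.sum_sub_distrib]; ring
    _ = 0 := by
        rw [Finset.sum_congr rfl fun v _ => this v]; simp


lemma dist_factor_of_split {Ω1 Ω2 α β γ : Type*} [Fintype Ω1] [Fintype Ω2]
    [Fintype α] [Fintype β] [Fintype γ]
    (e : Ω ≃ Ω1 × Ω2) (w1 : Ω1 → ℝ) (w2 : Ω2 → ℝ)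
    (A : Ω → α) (B : Ω → β) (C : Ω → γ)
    (E1 : α → γ → Ω1 → Prop) (E2 : β → γ → Ω2 → Prop)
    (hiff : ∀ ω a b c, ((A ω, B ω, C ω) = (a, b, c)) ↔ (E1 a c (e ω).1 ∧ E2 b c (e ω).2))
    (a : α) (b : β) (c : γ) :
    dist (fun ω => w1 (e ω).1 * w2 (e ω).2) (fun ω => (A ω, B ω, C ω)) (a, b, c)
      = (∑ ω1, if E1 a c ω1 then w1 ω1 else 0) * (∑ ω2, if E2 b c ω2 then w2 ω2 else 0) := by
  unfold dist
  beta_reduce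
  refine Eq.trans (Equiv.sum_comp e.symm _).symm ?_
  rw [Finset.sum_mul_sum, Fintype.sum_prod_type]
  refine Finset.sum_congr rfl fun q1 _ => Finset.sum_congr rfl fun q2 _ => ?_
  rw [hiff]
  simp only [Equiv.apply_symm_apply]
  by_cases h1 : E1 a c q1 <;> by_cases h2 : E2 b c q2 <;> simp [h1, h2]

lemma cmi_zero_of_split {Ω1 Ω2 α β γ : Type*} [Fintype Ω1] [Fintype Ω2]
    [Fintype α] [Fintype β] [Fintype γ]
    (e : Ω ≃ Ω1 × Ω2) (w : Ω → ℝ) (w1 : Ω1 → ℝ) (w2 : Ω2 → ℝ)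
    (hw1 : ∀ x, 0 ≤ w1 x) (hw2 : ∀ x, 0 ≤ w2 x)
    (hw : ∀ ω, w ω = w1 (e ω).1 * w2 (e ω).2)
    (A : Ω → α) (B : Ω → β) (C : Ω → γ)
    (E1 : α → γ → Ω1 → Prop) (E2 : β → γ → Ω2 → Prop)
    (hiff : ∀ ω a b c, ((A ω, B ω, C ω) = (a, b, c)) ↔ (E1 a c (e ω).1 ∧ E2 b c (e ω).2)) :
    condMutInfo w A B C = 0 := by
  apply cmi_zero_of_dist_factor w A B C
    (fun a c => ∑ ω1, if E1 a c ω1 then w1 ω1 else 0)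
    (fun b c => ∑ ω2, if E2 b c ω2 then w2 ω2 else 0)
  · intro a c
    exact Finset.sum_nonneg fun ω1 _ => by by_cases h : E1 a c ω1 <;> simp [h, hw1 ω1]
  · intro b c
    exact Finset.sum_nonneg fun ω2 _ => by by_cases h : E2 b c ω2 <;> simp [h, hw2 ω2]
  · intro a b c
    have hwe : w = fun ω => w1 (e ω).1 * w2 (e ω).2 := funext hw
    rw [hwe]
    exact dist_factor_of_split e w1 w2 A B C E1 E2 hiff a b c

end IT

open IT

@[simp] lemma piEquivPiSubtypeProd_fst_apply {ι : Type*} (q : ι → Prop) [DecidablePred q]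
    (β : ι → Type*) (f : ∀ i, β i) (x : {i // q i}) :
    ((Equiv.piEquivPiSubtypeProd q β) f).1 x = f x := rfl

@[simp] lemma piEquivPiSubtypeProd_snd_apply {ι : Type*} (q : ι → Prop) [DecidablePred q]
    (β : ι → Type*) (f : ∀ i, β i) (x : {i // ¬ q i}) :
    ((Equiv.piEquivPiSubtypeProd q β) f).2 x = f x := rfl


/-- **Lemma (interactive encoding of two nodes), items 4 and 5:**
(i) `X_{[t+1:n]} -∘- (J_x^{[1:K]}, J_y^{[1:K]}, X_{[1:t]}, Y_{[t+1:n]}) -∘- (Y_t, Z_t)` and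
(ii) `Y_{[1:t-1]} -∘- (J_x^{[1:K]}, J_y^{[1:K]}, X_{[1:t-1]}, Y_{[t:n]}) -∘- (X_t, Z_t)`. -/
theorem two_node_interactive_markov_items4_5
    {XA YA ZA : Type} [Fintype XA] [Fintype YA] [Fintype ZA]
    (p : XA × YA × ZA → ℝ) (hp : IsPMF p)
    {n K : ℕ} (mx my : Fin K → ℕ)
    (Jx : (l : Fin K) → (Fin n → XA × YA × ZA) → Fin (mx l))
    (Jy : (l : Fin K) → (Fin n → XA × YA × ZA) → Fin (my l))
    -- J_x^l = f_x^l(Xⁿ, J_x^{[1:l-1]}, J_y^{[1:l-1]})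
    (hJx : ∀ l : Fin K, ∃ f : (Fin n → XA) →
        ((k : Fin K) → k.val < l.val → Fin (mx k)) →
        ((k : Fin K) → k.val < l.val → Fin (my k)) → Fin (mx l),
      ∀ ω, Jx l ω = f (fun t => (ω t).1) (fun k _ => Jx k ω) (fun k _ => Jy k ω))
    -- J_y^l = f_y^l(Yⁿ, J_x^{[1:l]}, J_y^{[1:l-1]})
    (hJy : ∀ l : Fin K, ∃ f : (Fin n → YA) →
        ((k : Fin K) → k.val ≤ l.val → Fin (mx k)) →
        ((k : Fin K) → k.val < l.val → Fin (my k)) → Fin (my l),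
      ∀ ω, Jy l ω = f (fun t => (ω t).2.1) (fun k _ => Jx k ω) (fun k _ => Jy k ω))
    :
    ∀ t : Fin n,
      IT.condMutInfo (iidW p n)
        (fun ω => above t.val (fun s => (ω s).1))
        (fun ω => ((ω t).2.1, (ω t).2.2))
        (fun ω => ((fun k => Jx k ω), (fun k => Jy k ω),
          below (t.val + 1) (fun s => (ω s).1), above t.val (fun s => (ω s).2.1))) = 0 ∧
      IT.condMutInfo (iidW p n)
        (fun ω => below t.val (fun s => (ω s).2.1))
        (fun ω => ((ω t).1, (ω t).2.2))
        (fun ω => ((fun k => Jx k ω), (fun k => Jy k ω),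
          below t.val (fun s => (ω s).1), fromIdx t.val (fun s => (ω s).2.1))) = 0 := by

  classical
  -- Split the interactive messages into an x-side predicate and a y-side predicate.
  obtain ⟨PA, PB, hP⟩ :
      ∃ (PA : (((k : Fin K) → Fin (mx k)) × ((k : Fin K) → Fin (my k))) → (Fin n → XA) → Prop)
        (PB : (((k : Fin K) → Fin (mx k)) × ((k : Fin K) → Fin (my k))) → (Fin n → YA) → Prop),
        ∀ (ω : Fin n → XA × YA × ZA)
          (j : ((k : Fin K) → Fin (mx k)) × ((k : Fin K) → Fin (my k))),
          ((fun k => Jx k ω) = j.1 ∧ (fun k => Jy k ω) = j.2)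
            ↔ (PA j (fun s => (ω s).1) ∧ PB j (fun s => (ω s).2.1)) := by
    choose fx hfx using hJx
    choose fy hfy using hJy
    refine ⟨fun j xs => ∀ l, fx l xs (fun k _ => j.1 k) (fun k _ => j.2 k) = j.1 l,
            fun j ys => ∀ l, fy l ys (fun k _ => j.1 k) (fun k _ => j.2 k) = j.2 l, ?_⟩
    intro ω j
    constructor
    · rintro ⟨h1, h2⟩
      have h1' : ∀ k, Jx k ω = j.1 k := fun k => congrFun h1 k
      have h2' : ∀ k, Jy k ω = j.2 k := fun k => congrFun h2 k
      constructor
      · intro l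
        rw [show (fun k (_ : k.val < l.val) => j.1 k) = (fun k (_ : k.val < l.val) => Jx k ω)
            from by funext k hk; rw [h1'],
          show (fun k (_ : k.val < l.val) => j.2 k) = (fun k (_ : k.val < l.val) => Jy k ω)
            from by funext k hk; rw [h2']]
        rw [← hfx l ω]
        exact h1' l
      · intro l
        rw [show (fun k (_ : k.val ≤ l.val) => j.1 k) = (fun k (_ : k.val ≤ l.val) => Jx k ω)
            from by funext k hk; rw [h1'],
          show (fun k (_ : k.val < l.val) => j.2 k) = (fun k (_ : k.val < l.val) => Jy k ω)
            from by funext k hk; rw [h2']]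
        rw [← hfy l ω]
        exact h2' l
    · rintro ⟨hA, hB⟩
      have key : ∀ m, ∀ l : Fin K, l.val < m → (Jx l ω = j.1 l ∧ Jy l ω = j.2 l) := by
        intro m
        induction m with
        | zero => intro l hl; exact absurd hl (Nat.not_lt_zero _)
        | succ m IH =>
          intro l hl
          rcases Nat.lt_or_ge l.val m with hm | hm
          · exact IH l hm
          have hlm : l.val = m := le_antisymm (Nat.lt_succ_iff.mp hl) hm
          have hx : Jx l ω = j.1 l := by
            rw [hfx l ω]
            rw [show (fun k (_ : k.val < l.val) => Jx k ω) = fun k _ => j.1 k from by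
                funext k hk; exact (IH k (hlm ▸ hk)).1]
            rw [show (fun k (_ : k.val < l.val) => Jy k ω) = fun k _ => j.2 k from by
                funext k hk; exact (IH k (hlm ▸ hk)).2]
            exact hA l
          have hy : Jy l ω = j.2 l := by
            rw [hfy l ω]
            rw [show (fun k (_ : k.val ≤ l.val) => Jx k ω) = fun k _ => j.1 k from by
                funext k hk
                rcases Nat.lt_or_ge k.val l.val with h | h
                · exact (IH k (hlm ▸ h)).1
                · have hkl : k = l := Fin.ext (le_antisymm hk h)
                  rw [hkl]; exact hx]
            rw [show (fun k (_ : k.val < l.val) => Jy k ω) = fun k _ => j.2 k from by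
                funext k hk; exact (IH k (hlm ▸ hk)).2]
            exact hB l
          exact ⟨hx, hy⟩
      exact ⟨funext fun k => (key (k.val + 1) k (Nat.lt_succ_self _)).1,
             funext fun k => (key (k.val + 1) k (Nat.lt_succ_self _)).2⟩
  intro t
  constructor
  · -- Chain (i)
    refine IT.cmi_zero_of_split
      (Equiv.piEquivPiSubtypeProd (fun s : Fin n => t.val < s.val) (fun _ => XA × YA × ZA))
      (iidW p n)
      (fun ω1 => ∏ s : {s : Fin n // t.val < s.val}, p (ω1 s))
      (fun ω2 => ∏ s : {s : Fin n // ¬ t.val < s.val}, p (ω2 s))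
      (fun ω1 => Finset.prod_nonneg fun s _ => hp.1 _)
      (fun ω2 => Finset.prod_nonneg fun s _ => hp.1 _)
      (fun ω => by
        simp only [iidW, Equiv.piEquivPiSubtypeProd, Equiv.coe_fn_mk]
        exact (Fintype.prod_subtype_mul_prod_subtype (fun s : Fin n => t.val < s.val)
          (fun s => p (ω s))).symm)
      _ _ _
      (fun a c ω1 =>
        (∀ s : Fin n, (if h : t.val < s.val then some ((ω1 ⟨s, h⟩).1) else none) = a s)
        ∧ (∀ s : Fin n, (if h : t.val < s.val then some ((ω1 ⟨s, h⟩).2.1) else none) = c.2.2.2 s)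
        ∧ (∃ xf : Fin n → XA, (∀ (s : Fin n) (h : t.val < s.val), xf s = (ω1 ⟨s, h⟩).1)
            ∧ (∀ s : Fin n, ¬ t.val < s.val → some (xf s) = c.2.2.1 s)
            ∧ PA (c.1, c.2.1) xf))
      (fun b c ω2 =>
        ((ω2 ⟨t, lt_irrefl t.val⟩).2.1, (ω2 ⟨t, lt_irrefl t.val⟩).2.2) = b
        ∧ (∀ s : Fin n, (if h : ¬ t.val < s.val then some ((ω2 ⟨s, h⟩).1) else none) = c.2.2.1 s)
        ∧ (∃ yf : Fin n → YA, (∀ (s : Fin n) (h : ¬ t.val < s.val), yf s = (ω2 ⟨s, h⟩).2.1)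
            ∧ (∀ s : Fin n, t.val < s.val → some (yf s) = c.2.2.2 s)
            ∧ PB (c.1, c.2.1) yf))
      ?_
    intro ω a b c
    constructor
    · intro h
      have hA : above t.val (fun s => (ω s).1) = a := congrArg Prod.fst h
      have hB : ((ω t).2.1, (ω t).2.2) = b := congrArg (fun x => x.2.1) h
      have hC1 : (fun k => Jx k ω) = c.1 := congrArg (fun x => x.2.2.1) h
      have hC2 : (fun k => Jy k ω) = c.2.1 := congrArg (fun x => x.2.2.2.1) h
      have hC3 : below (t.val + 1) (fun s => (ω s).1) = c.2.2.1 :=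
        congrArg (fun x => x.2.2.2.2.1) h
      have hC4 : above t.val (fun s => (ω s).2.1) = c.2.2.2 :=
        congrArg (fun x => x.2.2.2.2.2) h
      have hPP := (hP ω (c.1, c.2.1)).mp ⟨hC1, hC2⟩
      refine ⟨⟨?_, ?_, ?_⟩, ?_, ?_, ?_⟩
      · intro s
        rw [← hA]
        by_cases hs : t.val < s.val <;> simp [above, hs, Equiv.piEquivPiSubtypeProd]
      · intro s
        rw [← hC4]
        by_cases hs : t.val < s.val <;> simp [above, hs, Equiv.piEquivPiSubtypeProd]
      · refine ⟨fun s => (ω s).1, fun s h => rfl, fun s h => ?_, hPP.1⟩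
        rw [← hC3]
        simp only [below]
        rw [if_pos (by omega)]
      · exact hB
      · intro s
        rw [← hC3]
        by_cases hs : t.val < s.val
        · rw [dif_neg (not_not_intro hs)]
          simp only [below]
          rw [if_neg (by omega)]
        · rw [dif_pos hs]
          simp only [below]
          rw [if_pos (by omega)]
          rfl
      · refine ⟨fun s => (ω s).2.1, fun s h => rfl, fun s h => ?_, hPP.2⟩
        rw [← hC4]
        simp only [above]
        rw [if_pos h]
    · rintro ⟨⟨hE1a, hE1y, xf, hxf1, hxf2, hPA⟩, hE2b, hE2x, yf, hyf1, hyf2, hPB⟩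
      have hxf : xf = fun s => (ω s).1 := by
        funext s
        by_cases hs : t.val < s.val
        · exact hxf1 s hs
        · have h1 := hxf2 s hs
          have h2 := hE2x s
          rw [dif_pos hs] at h2
          rw [← h2] at h1
          exact Option.some_injective _ h1
      have hyf : yf = fun s => (ω s).2.1 := by
        funext s
        by_cases hs : t.val < s.val
        · have h1 := hyf2 s hs
          have h2 := hE1y s
          rw [dif_pos hs] at h2
          rw [← h2] at h1
          exact Option.some_injective _ h1
        · exact hyf1 s hs
      have hJ := (hP ω (c.1, c.2.1)).mpr ⟨hxf ▸ hPA, hyf ▸ hPB⟩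
      have hA : above t.val (fun s => (ω s).1) = a := by
        funext s
        rw [← hE1a s]
        by_cases hs : t.val < s.val <;> simp [above, hs, Equiv.piEquivPiSubtypeProd]
      have hC3 : below (t.val + 1) (fun s => (ω s).1) = c.2.2.1 := by
        funext s
        rw [← hE2x s]
        by_cases hs : t.val < s.val
        · rw [dif_neg (not_not_intro hs)]
          simp only [below]
          rw [if_neg (by omega)]
        · rw [dif_pos hs]
          simp only [below]
          rw [if_pos (by omega)]
          rfl
      have hC4 : above t.val (fun s => (ω s).2.1) = c.2.2.2 := by
        funext s
        rw [← hE1y s]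
        by_cases hs : t.val < s.val <;> simp [above, hs, Equiv.piEquivPiSubtypeProd]
      rw [hA, hC3, hC4, hJ.1, hJ.2, ← hE2b]
      rfl
  · -- Chain (ii)
    refine IT.cmi_zero_of_split
      (Equiv.piEquivPiSubtypeProd (fun s : Fin n => s.val < t.val) (fun _ => XA × YA × ZA))
      (iidW p n)
      (fun ω1 => ∏ s : {s : Fin n // s.val < t.val}, p (ω1 s))
      (fun ω2 => ∏ s : {s : Fin n // ¬ s.val < t.val}, p (ω2 s))
      (fun ω1 => Finset.prod_nonneg fun s _ => hp.1 _)
      (fun ω2 => Finset.prod_nonneg fun s _ => hp.1 _)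
      (fun ω => by
        simp only [iidW, Equiv.piEquivPiSubtypeProd, Equiv.coe_fn_mk]
        exact (Fintype.prod_subtype_mul_prod_subtype (fun s : Fin n => s.val < t.val)
          (fun s => p (ω s))).symm)
      _ _ _
      (fun a c ω1 =>
        (∀ s : Fin n, (if h : s.val < t.val then some ((ω1 ⟨s, h⟩).2.1) else none) = a s)
        ∧ (∀ s : Fin n, (if h : s.val < t.val then some ((ω1 ⟨s, h⟩).1) else none) = c.2.2.1 s)
        ∧ (∃ yf : Fin n → YA, (∀ (s : Fin n) (h : s.val < t.val), yf s = (ω1 ⟨s, h⟩).2.1)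
            ∧ (∀ s : Fin n, ¬ s.val < t.val → some (yf s) = c.2.2.2 s)
            ∧ PB (c.1, c.2.1) yf))
      (fun b c ω2 =>
        ((ω2 ⟨t, lt_irrefl t.val⟩).1, (ω2 ⟨t, lt_irrefl t.val⟩).2.2) = b
        ∧ (∀ s : Fin n, (if h : ¬ s.val < t.val then some ((ω2 ⟨s, h⟩).2.1) else none) = c.2.2.2 s)
        ∧ (∃ xf : Fin n → XA, (∀ (s : Fin n) (h : ¬ s.val < t.val), xf s = (ω2 ⟨s, h⟩).1)
            ∧ (∀ s : Fin n, s.val < t.val → some (xf s) = c.2.2.1 s)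
            ∧ PA (c.1, c.2.1) xf))
      ?_
    intro ω a b c
    constructor
    · intro h
      have hA : below t.val (fun s => (ω s).2.1) = a := congrArg Prod.fst h
      have hB : ((ω t).1, (ω t).2.2) = b := congrArg (fun x => x.2.1) h
      have hC1 : (fun k => Jx k ω) = c.1 := congrArg (fun x => x.2.2.1) h
      have hC2 : (fun k => Jy k ω) = c.2.1 := congrArg (fun x => x.2.2.2.1) h
      have hC3 : below t.val (fun s => (ω s).1) = c.2.2.1 :=
        congrArg (fun x => x.2.2.2.2.1) h
      have hC4 : fromIdx t.val (fun s => (ω s).2.1) = c.2.2.2 :=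
        congrArg (fun x => x.2.2.2.2.2) h
      have hPP := (hP ω (c.1, c.2.1)).mp ⟨hC1, hC2⟩
      refine ⟨⟨?_, ?_, ?_⟩, ?_, ?_, ?_⟩
      · intro s
        rw [← hA]
        by_cases hs : s.val < t.val <;> simp [below, hs, Equiv.piEquivPiSubtypeProd]
      · intro s
        rw [← hC3]
        by_cases hs : s.val < t.val <;> simp [below, hs, Equiv.piEquivPiSubtypeProd]
      · refine ⟨fun s => (ω s).2.1, fun s h => rfl, fun s h => ?_, hPP.2⟩
        rw [← hC4]
        simp only [fromIdx]
        rw [if_pos (by omega)]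
      · exact hB
      · intro s
        rw [← hC4]
        by_cases hs : s.val < t.val
        · rw [dif_neg (not_not_intro hs)]
          simp only [fromIdx]
          rw [if_neg (by omega)]
        · rw [dif_pos hs]
          simp only [fromIdx]
          rw [if_pos (by omega)]
          rfl
      · refine ⟨fun s => (ω s).1, fun s h => rfl, fun s h => ?_, hPP.1⟩
        rw [← hC3]
        simp only [below]
        rw [if_pos h]
    · rintro ⟨⟨hE1a, hE1x, yf, hyf1, hyf2, hPB⟩, hE2b, hE2y, xf, hxf1, hxf2, hPA⟩
      have hxf : xf = fun s => (ω s).1 := by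
        funext s
        by_cases hs : s.val < t.val
        · have h1 := hxf2 s hs
          have h2 := hE1x s
          rw [dif_pos hs] at h2
          rw [← h2] at h1
          exact Option.some_injective _ h1
        · exact hxf1 s hs
      have hyf : yf = fun s => (ω s).2.1 := by
        funext s
        by_cases hs : s.val < t.val
        · exact hyf1 s hs
        · have h1 := hyf2 s hs
          have h2 := hE2y s
          rw [dif_pos hs] at h2
          rw [← h2] at h1
          exact Option.some_injective _ h1
      have hJ := (hP ω (c.1, c.2.1)).mpr ⟨hxf ▸ hPA, hyf ▸ hPB⟩
      have hA : below t.val (fun s => (ω s).2.1) = a := by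
        funext s
        rw [← hE1a s]
        by_cases hs : s.val < t.val <;> simp [below, hs, Equiv.piEquivPiSubtypeProd]
      have hC3 : below t.val (fun s => (ω s).1) = c.2.2.1 := by
        funext s
        rw [← hE1x s]
        by_cases hs : s.val < t.val <;> simp [below, hs, Equiv.piEquivPiSubtypeProd]
      have hC4 : fromIdx t.val (fun s => (ω s).2.1) = c.2.2.2 := by
        funext s
        rw [← hE2y s]
        by_cases hs : s.val < t.val
        · rw [dif_neg (not_not_intro hs)]
          simp only [fromIdx]
          rw [if_neg (by omega)]
        · rw [dif_pos hs]
          simp only [fromIdx]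
          rw [if_pos (by omega)]
          rfl
      rw [hA, hC3, hC4, hJ.1, hJ.2, ← hE2b]
      rfl
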